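/- For nonnegative measurable functions g_1,…,g_{d+1} on ℝ × ℝ^d and distinct times t_1,…,t_{d+1} ∈ ℝ, for any fixed pair of indices 1 ≤ i < j ≤ d+1 one has ∫_{ℝ^d}∫_{ℝ^d} ∏_{k=1}^{d+1} g_k(t_k, x + t_k v) dx dv ≤ |t_i − t_j|^{−d} ‖g_i(t_i,·)‖_{L^1(ℝ^d)} ‖g_j(t_j,·)‖_{L^1(ℝ^d)} ∏_{k ≠ i,j} ‖g_k(t_k,·)‖_{L^∞(ℝ^d)}. -/

import Mathlib

open MeasureTheory ENNReal Finset

/-- for nonnegative measurable `g_1, …, g_{d+1}` on `ℝ × ℝ^d` and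
distinct times `t_1, …, t_{d+1}`, for any fixed pair `i < j`,
`∫∫ ∏_k g_k(t_k, x + t_k v) dx dv
  ≤ |t_i − t_j|^{−d} ‖g_i(t_i,·)‖_{L^1} ‖g_j(t_j,·)‖_{L^1} ∏_{k ≠ i,j} ‖g_k(t_k,·)‖_{L^∞}`. -/
theorem kinetic_multilinear_L1_Linfty_bound (d : ℕ)
    (g : Fin (d + 1) → ℝ → (Fin d → ℝ) → ℝ)
    (hg_meas : ∀ k, Measurable (Function.uncurry (g k)))
    (hg_nonneg : ∀ k t x, 0 ≤ g k t x)
    (t : Fin (d + 1) → ℝ) (ht : Function.Injective t)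
    (i j : Fin (d + 1)) (hij : i < j) :
    (∫⁻ v : Fin d → ℝ, ∫⁻ x : Fin d → ℝ,
        ∏ k : Fin (d + 1), ENNReal.ofReal (g k (t k) (x + t k • v)))
      ≤ (ENNReal.ofReal |t i - t j| ^ d)⁻¹
          * eLpNorm (g i (t i)) 1 volume * eLpNorm (g j (t j)) 1 volume
          * ∏ k ∈ univ \ {i, j}, eLpNorm (g k (t k)) ∞ volume := by
  classical
  have hij' : i ≠ j := ne_of_lt hij
  set c : ℝ := t j - t i with hc
  have hc0 : c ≠ 0 := sub_ne_zero.mpr fun h => hij' (ht h).symm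
  set f : Fin (d + 1) → (Fin d → ℝ) → ℝ≥0∞ :=
    fun k y => ENNReal.ofReal (g k (t k) y) with hf
  have hsec : ∀ k, Measurable (g k (t k)) := fun k =>
    (hg_meas k).comp measurable_prodMk_left
  have hf_meas : ∀ k, Measurable (f k) := fun k =>
    ENNReal.measurable_ofReal.comp (hsec k)
  have hfe : ∀ k y, f k y = (‖g k (t k) y‖₊ : ℝ≥0∞) := fun k y =>
    (Real.enorm_eq_ofReal (hg_nonneg k (t k) y)).symm
  set M : Fin (d + 1) → ℝ≥0∞ := fun k => eLpNorm (g k (t k)) ∞ volume with hM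
  have hMae : ∀ k, ∀ᵐ y : Fin d → ℝ, f k y ≤ M k := by
    intro k
    have := _root_.ae_le_essSup (μ := volume) (f := fun y => (‖g k (t k) y‖₊ : ℝ≥0∞))
    filter_upwards [this] with y hy
    rw [hfe, hM]
    simp [eLpNorm, eLpNormEssSup]
    exact hy
  have hL1 : ∀ k, eLpNorm (g k (t k)) 1 volume = ∫⁻ y, f k y := by
    intro k
    rw [eLpNorm_one_eq_lintegral_enorm]
    exact lintegral_congr fun y => (hfe k y).symm
  set C : ℝ≥0∞ := ∏ k ∈ univ \ {i, j}, M k with hC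
  -- step 1: pointwise a.e. bound
  have step1 : (∫⁻ v : Fin d → ℝ, ∫⁻ x : Fin d → ℝ,
      ∏ k : Fin (d + 1), f k (x + t k • v))
      ≤ ∫⁻ v : Fin d → ℝ, (∫⁻ x : Fin d → ℝ,
          f i (x + t i • v) * f j (x + t j • v)) * C := by
    refine lintegral_mono fun v => ?_
    have hm : Measurable (fun x : Fin d → ℝ => f i (x + t i • v) * f j (x + t j • v)) :=
      ((hf_meas i).comp (measurable_add_const (t i • v))).mul
        ((hf_meas j).comp (measurable_add_const (t j • v)))
    rw [← lintegral_mul_const C hm]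
    refine lintegral_mono_ae ?_
    have hae : ∀ᵐ x : Fin d → ℝ, ∀ k, f k (x + t k • v) ≤ M k := by
      rw [ae_all_iff]
      intro k
      exact (measurePreserving_add_right volume (t k • v)).quasiMeasurePreserving.ae (hMae k)
    filter_upwards [hae] with x hx
    have hsub : ({i, j} : Finset (Fin (d + 1))) ⊆ univ := subset_univ _
    calc ∏ k : Fin (d + 1), f k (x + t k • v)
        = (∏ k ∈ univ \ {i, j}, f k (x + t k • v)) *
          ∏ k ∈ ({i, j} : Finset (Fin (d + 1))), f k (x + t k • v) :=
          (Finset.prod_sdiff hsub).symm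
      _ ≤ C * (f i (x + t i • v) * f j (x + t j • v)) := by
          refine mul_le_mul' (Finset.prod_le_prod' fun k _ => hx k) ?_
          rw [Finset.prod_pair hij']
      _ = f i (x + t i • v) * f j (x + t j • v) * C := by ring
  refine step1.trans ?_
  -- step 2: translate in x
  have step2 : ∀ v : Fin d → ℝ,
      (∫⁻ x : Fin d → ℝ, f i (x + t i • v) * f j (x + t j • v))
        = ∫⁻ x : Fin d → ℝ, f i x * f j (x + c • v) := by
    intro v
    have := lintegral_add_right_eq_self (μ := volume)
      (fun x : Fin d → ℝ => f i x * f j (x + c • v)) (t i • v)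
    rw [← this]
    refine lintegral_congr fun x => ?_
    congr 2
    rw [hc, sub_smul]
    abel
  simp_rw [step2]
  have hunc : Measurable (Function.uncurry fun (v x : Fin d → ℝ) =>
      f i x * f j (x + c • v)) :=
    ((hf_meas i).comp measurable_snd).mul
      ((hf_meas j).comp (measurable_snd.add (measurable_fst.const_smul c)))
  rw [lintegral_mul_const C hunc.lintegral_prod_right]
  -- step 3: swap integrals
  have hswap : (∫⁻ v : Fin d → ℝ, ∫⁻ x : Fin d → ℝ, f i x * f j (x + c • v))
      = ∫⁻ x : Fin d → ℝ, ∫⁻ v : Fin d → ℝ, f i x * f j (x + c • v) := by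
    exact lintegral_lintegral_swap hunc.aemeasurable
  rw [hswap]
  -- step 4: scaling in v
  set D : ℝ≥0∞ := ENNReal.ofReal |(c ^ d)⁻¹| with hD
  have step4 : ∀ x : Fin d → ℝ,
      (∫⁻ v : Fin d → ℝ, f j (x + c • v)) = D * ∫⁻ y, f j y := by
    intro x
    have hmap : (volume : Measure (Fin d → ℝ)).map (c • ·)
        = ENNReal.ofReal |(c ^ Module.finrank ℝ (Fin d → ℝ))⁻¹| • volume :=
      Measure.map_addHaar_smul volume hc0
    have hgm : Measurable fun w : Fin d → ℝ => f j (x + w) :=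
      (hf_meas j).comp (measurable_const_add x)
    have h1 : (∫⁻ w, f j (x + w) ∂((volume : Measure (Fin d → ℝ)).map (c • ·)))
        = ∫⁻ v : Fin d → ℝ, f j (x + c • v) :=
      lintegral_map hgm (measurable_const_smul c)
    have hfr : Module.finrank ℝ (Fin d → ℝ) = d := by
      simp [Module.finrank_fintype_fun_eq_card]
    rw [← h1, hmap, hfr, lintegral_smul_measure,
      lintegral_add_left_eq_self (μ := volume) (fun w => f j w) x]
    rfl
  have hpull : (∫⁻ x : Fin d → ℝ, ∫⁻ v : Fin d → ℝ, f i x * f j (x + c • v))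
      = ∫⁻ x : Fin d → ℝ, f i x * (D * ∫⁻ y, f j y) := by
    refine lintegral_congr fun x => ?_
    have hmj : Measurable fun v : Fin d → ℝ => f j (x + c • v) :=
      (hf_meas j).comp ((measurable_const_smul c).const_add x)
    rw [lintegral_const_mul _ hmj, step4 x]
  rw [hpull, lintegral_mul_const _ (hf_meas i)]
  -- wrap up: rewrite constants
  have hDval : D = (ENNReal.ofReal |t i - t j| ^ d)⁻¹ := by
    rw [hD]
    have habs : |t i - t j| = |c| := by rw [hc, abs_sub_comm]
    rw [habs, abs_inv, abs_pow, ENNReal.ofReal_inv_of_pos (by positivity),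
      ENNReal.ofReal_pow (abs_nonneg c)]
  rw [hDval, hL1 i, hL1 j]
  exact le_of_eq (by ring)
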